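/- Let A be an n-by-n absolutely flat idempotent with constant 1/k and rank r, and let m be the number of negative diagonal entries of A. Then n = rk + 2m. -/

import Mathlib

theorem stmt_3 (n k : ℕ) (hk : 0 < k) (A : Matrix (Fin n) (Fin n) ℝ)
    (hidem : A * A = A)
    (hpm : ∀ i j, A i j = 1 / k ∨ A i j = -(1 / k))
    (r m : ℕ) (hr : A.rank = r)
    (hm : (Finset.univ.filter (fun i : Fin n => A i i = -(1 / k))).card = m) :
    n = r * k + 2 * m := by
  classical
  have hk' : (0 : ℝ) < (k : ℝ) := by exact_mod_cast hk
  -- idempotence of the linear map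
  have hf : A.mulVecLin ∘ₗ A.mulVecLin = A.mulVecLin := by
    rw [← Matrix.mulVecLin_mul, hidem]
  obtain ⟨p, hp⟩ := (LinearMap.isProj_iff_isIdempotentElem A.mulVecLin).mpr hf
  have hrange : LinearMap.range A.mulVecLin = p := by
    apply le_antisymm
    · rintro x ⟨y, rfl⟩; exact hp.map_mem y
    · intro x hx; exact ⟨x, hp.map_id x hx⟩
  -- trace equals rank
  have htr : A.trace = (r : ℝ) := by
    have h1 : LinearMap.trace ℝ (Fin n → ℝ) A.mulVecLin = (Module.finrank ℝ p : ℝ) := hp.trace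
    have h2 : LinearMap.trace ℝ (Fin n → ℝ) A.mulVecLin = A.trace := by
      rw [LinearMap.trace_eq_matrix_trace ℝ (Pi.basisFun ℝ (Fin n)),
        LinearMap.toMatrix_eq_toMatrix']
      congr 1
      have : A.mulVecLin = Matrix.toLin' A := rfl
      rw [this, LinearMap.toMatrix'_toLin']
    rw [← h2, h1, ← hr, Matrix.rank, hrange]
  -- compute the trace via diagonal entries
  let S := Finset.univ.filter (fun i : Fin n => A i i = -(1 / k))
  have htr2 : A.trace = (n - m : ℝ) * (1 / k) + (m : ℝ) * (-(1 / k)) := by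
    rw [Matrix.trace, ← Finset.sum_filter_add_sum_filter_not Finset.univ
      (fun i : Fin n => A i i = -(1 / k))]
    have hS : ∑ i ∈ S, Matrix.diag A i = (m : ℝ) * (-(1 / k)) := by
      have h1 : ∑ i ∈ S, Matrix.diag A i = ∑ _i ∈ S, (-(1 / (k:ℝ))) :=
        Finset.sum_congr rfl (fun i hi => (Finset.mem_filter.mp hi).2)
      rw [h1, Finset.sum_const, show S.card = m from hm, nsmul_eq_mul]
    have hSc : ∑ i ∈ Finset.univ.filter (fun i : Fin n => ¬ A i i = -(1 / k)),
        Matrix.diag A i = (n - m : ℝ) * (1 / k) := by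
      have : ∀ i ∈ Finset.univ.filter (fun i : Fin n => ¬ A i i = -(1 / k)),
          Matrix.diag A i = 1 / (k : ℝ) := by
        intro i hi
        rcases hpm i i with h | h
        · exact h
        · exact absurd h (Finset.mem_filter.mp hi).2
      have h1 : ∑ i ∈ Finset.univ.filter (fun i : Fin n => ¬ A i i = -(1 / k)),
          Matrix.diag A i = ∑ _i ∈ Finset.univ.filter (fun i : Fin n => ¬ A i i = -(1 / k)),
          (1 / (k:ℝ)) := Finset.sum_congr rfl this
      rw [h1, Finset.sum_const, nsmul_eq_mul,
        Finset.filter_not, Finset.card_sdiff_of_subset (Finset.filter_subset _ _),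
        Finset.card_univ, Fintype.card_fin, hm]
      have hmn : m ≤ n := by
        rw [← hm]
        exact (Finset.card_filter_le _ _).trans (by simp)
      rw [Nat.cast_sub hmn]
    rw [hS, hSc]
    ring
  -- combine
  have key : (n : ℝ) = (r : ℝ) * k + 2 * m := by
    have := htr.symm.trans htr2
    field_simp at this
    linarith
  exact_mod_cast key
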